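/- It holds that α₀ = α·(1 − essinf_m(f_s/f_b)), where essinf_m g := sup{a ∈ ℝ : m({x : g(x) < a}) = 0}. As a consequence, α₀ < α if and only if there exists c > 0 such that f_s ≥ c·f_b m-almost everywhere. -/

import Mathlib

open Filter Topology

/-- A cumulative distribution function: non-decreasing, right-continuous,
tending to 0 at -∞ and to 1 at +∞. -/
def IsCDF (G : ℝ → ℝ) : Prop :=
  Monotone G ∧ (∀ x : ℝ, ContinuousWithinAt G (Set.Ici x) x) ∧
    Tendsto G atBot (𝓝 0) ∧ Tendsto G atTop (𝓝 1)

/-- The identifiable mixing proportion α₀. -/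
noncomputable def alpha0 (F Fb : ℝ → ℝ) : ℝ :=
  sInf {γ : ℝ | γ ∈ Set.Ioc (0 : ℝ) 1 ∧
    IsCDF (fun x => (F x - (1 - γ) * Fb x) / γ)}

open MeasureTheory
open scoped ENNReal NNReal

lemma ae_le_of_Ioc_integral_le (g1 g2 : ℝ → ℝ)
    (h1 : Integrable g1) (h2 : Integrable g2)
    (h1n : 0 ≤ᵐ[volume] g1) (h2n : 0 ≤ᵐ[volume] g2)
    (hle : ∀ a b : ℝ, a ≤ b →
      (∫ x in Set.Ioc a b, g1 x) ≤ ∫ x in Set.Ioc a b, g2 x) :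
    g1 ≤ᵐ[volume] g2 := by
  set H1 : ℝ → ℝ := fun x => ∫ t in Set.Iic x, g1 t with hH1
  set H2 : ℝ → ℝ := fun x => ∫ t in Set.Iic x, g2 t with hH2
  have hdiff1 : ∀ x y : ℝ, x ≤ y → H1 y - H1 x = ∫ t in Set.Ioc x y, g1 t := by
    intro x y hxy
    rw [hH1]; dsimp only
    rw [intervalIntegral.integral_Iic_sub_Iic h1.integrableOn h1.integrableOn,
      intervalIntegral.integral_of_le hxy]
  have hdiff2 : ∀ x y : ℝ, x ≤ y → H2 y - H2 x = ∫ t in Set.Ioc x y, g2 t := by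
    intro x y hxy
    rw [hH2]; dsimp only
    rw [intervalIntegral.integral_Iic_sub_Iic h2.integrableOn h2.integrableOn,
      intervalIntegral.integral_of_le hxy]
  have H1mono : Monotone H1 := by
    intro x y hxy
    have := setIntegral_nonneg_of_ae (s := Set.Ioc x y) h1n
    have e := hdiff1 x y hxy; linarith
  have H2mono : Monotone H2 := by
    intro x y hxy
    have := setIntegral_nonneg_of_ae (s := Set.Ioc x y) h2n
    have e := hdiff2 x y hxy; linarith
  have H1cont : Continuous H1 := by
    have : H1 = fun x => (∫ t in Set.Iic (0:ℝ), g1 t) + ∫ t in (0:ℝ)..x, g1 t := by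
      funext x
      rw [hH1]; dsimp only
      rw [← intervalIntegral.integral_Iic_sub_Iic h1.integrableOn h1.integrableOn]; ring
    rw [this]
    exact continuous_const.add (h1.continuous_primitive 0)
  have H2cont : Continuous H2 := by
    have : H2 = fun x => (∫ t in Set.Iic (0:ℝ), g2 t) + ∫ t in (0:ℝ)..x, g2 t := by
      funext x
      rw [hH2]; dsimp only
      rw [← intervalIntegral.integral_Iic_sub_Iic h2.integrableOn h2.integrableOn]; ring
    rw [this]
    exact continuous_const.add (h2.continuous_primitive 0)
  have Dmono : Monotone (fun x => H2 x - H1 x) := by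
    intro x y hxy
    have e1 := hdiff1 x y hxy
    have e2 := hdiff2 x y hxy
    have := hle x y hxy
    dsimp only; linarith
  let S1 : StieltjesFunction ℝ := ⟨H1, H1mono, fun x => H1cont.continuousAt.continuousWithinAt⟩
  let S2 : StieltjesFunction ℝ := ⟨H2, H2mono, fun x => H2cont.continuousAt.continuousWithinAt⟩
  let SD : StieltjesFunction ℝ := ⟨fun x => H2 x - H1 x, Dmono,
    fun x => (H2cont.sub H1cont).continuousAt.continuousWithinAt⟩
  obtain ⟨g1', g1'meas, hg1'⟩ : ∃ g', Measurable g' ∧ g1 =ᵐ[volume] g' :=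
    ⟨h1.1.mk g1, h1.1.stronglyMeasurable_mk.measurable, h1.1.ae_eq_mk⟩
  obtain ⟨g2', g2'meas, hg2'⟩ : ∃ g', Measurable g' ∧ g2 =ᵐ[volume] g' :=
    ⟨h2.1.mk g2, h2.1.stronglyMeasurable_mk.measurable, h2.1.ae_eq_mk⟩
  set ν1 : Measure ℝ := volume.withDensity (fun x => ENNReal.ofReal (g1' x)) with hν1def
  set ν2 : Measure ℝ := volume.withDensity (fun x => ENNReal.ofReal (g2' x)) with hν2def
  have hfin : ∀ (g g' : ℝ → ℝ), Integrable g volume → g =ᵐ[volume] g' →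
      (∫⁻ x, ENNReal.ofReal (g' x)) ≠ ⊤ := by
    intro g g' hg hgg'
    have e : (∫⁻ x, ENNReal.ofReal (g' x)) = ∫⁻ x, ENNReal.ofReal (g x) :=
      lintegral_congr_ae ((hgg'.fun_comp ENNReal.ofReal).symm)
    rw [e]
    have : (∫⁻ x, ENNReal.ofReal (g x)) ≤ ∫⁻ x, (‖g x‖₊ : ℝ≥0∞) := by
      apply lintegral_mono
      intro x
      simp only
      rw [← enorm_eq_nnnorm, Real.enorm_eq_ofReal_abs]
      exact ENNReal.ofReal_le_ofReal (le_abs_self _)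
    exact (this.trans_lt hg.2).ne
  haveI : IsFiniteMeasure ν1 := isFiniteMeasure_withDensity (hfin g1 g1' h1 hg1')
  haveI : IsFiniteMeasure ν2 := isFiniteMeasure_withDensity (hfin g2 g2' h2 hg2')
  have hνIoc : ∀ (g g' : ℝ → ℝ), Integrable g volume → 0 ≤ᵐ[volume] g → g =ᵐ[volume] g' →
      ∀ a b : ℝ, (volume.withDensity (fun x => ENNReal.ofReal (g' x))) (Set.Ioc a b)
        = ENNReal.ofReal (∫ t in Set.Ioc a b, g t) := by
    intro g g' hg hgn hgg' a b
    rw [withDensity_apply _ measurableSet_Ioc]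
    have e : (∫⁻ x in Set.Ioc a b, ENNReal.ofReal (g' x))
        = ∫⁻ x in Set.Ioc a b, ENNReal.ofReal (g x) :=
      lintegral_congr_ae (ae_restrict_of_ae ((hgg'.fun_comp ENNReal.ofReal).symm))
    rw [e, ← ofReal_integral_eq_lintegral_ofReal hg.integrableOn (ae_restrict_of_ae hgn)]
  have hν1S : ν1 = S1.measure := by
    refine Measure.ext_of_Ioc ν1 S1.measure (fun a b hab => ?_)
    rw [hν1def, hνIoc g1 g1' h1 h1n hg1' a b, StieltjesFunction.measure_Ioc]
    have : S1 b - S1 a = ∫ t in Set.Ioc a b, g1 t := hdiff1 a b hab.le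
    rw [this]
  have hν2S : ν2 = S2.measure := by
    refine Measure.ext_of_Ioc ν2 S2.measure (fun a b hab => ?_)
    rw [hν2def, hνIoc g2 g2' h2 h2n hg2' a b, StieltjesFunction.measure_Ioc]
    have : S2 b - S2 a = ∫ t in Set.Ioc a b, g2 t := hdiff2 a b hab.le
    rw [this]
  have hsplit : S2.measure = S1.measure + SD.measure := by
    refine Measure.ext_of_Ioc _ _ (fun a b hab => ?_)
    rw [Measure.add_apply, StieltjesFunction.measure_Ioc, StieltjesFunction.measure_Ioc,
      StieltjesFunction.measure_Ioc,
      ← ENNReal.ofReal_add (sub_nonneg.2 (H1mono hab.le)) (sub_nonneg.2 (Dmono hab.le))]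
    congr 1
    show H2 b - H2 a = (H1 b - H1 a) + ((H2 b - H1 b) - (H2 a - H1 a))
    ring
  have key : ∀ s : Set ℝ, MeasurableSet s → volume s < ⊤ →
      (∫⁻ x in s, ENNReal.ofReal (g1' x)) ≤ ∫⁻ x in s, ENNReal.ofReal (g2' x) := by
    intro s hs _
    rw [← withDensity_apply _ hs, ← withDensity_apply _ hs, ← hν1def, ← hν2def, hν1S, hν2S,
      hsplit, Measure.add_apply]
    exact le_self_add
  have hae : (fun x => ENNReal.ofReal (g1' x)) ≤ᵐ[volume] (fun x => ENNReal.ofReal (g2' x)) :=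
    ae_le_of_forall_setLIntegral_le_of_sigmaFinite₀ g1'meas.ennreal_ofReal.aemeasurable key
  filter_upwards [hae, hg1', hg2', h2n] with x hx e1 e2 hx2
  rw [← e1, ← e2] at hx
  exact (ENNReal.ofReal_le_ofReal_iff hx2).1 hx


/-- The essential infimum of g with respect to Lebesgue measure:
essinf g := sup{a ∈ ℝ : m({x : g(x) < a}) = 0}. -/
noncomputable def essInfLebesgue (g : ℝ → ℝ) : ℝ :=
  sSup {a : ℝ | volume {x : ℝ | g x < a} = 0}

/-- Lemma 4: for absolutely continuous components,
α₀ = α(1 − essinf (f_s/f_b)), and α₀ < α iff f_s ≥ c·f_b a.e. for some c > 0. -/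
theorem alpha0_absolutely_continuous
    (Fs Fb fs fb : ℝ → ℝ) (hFs : IsCDF Fs) (hFb : IsCDF Fb) (hne : Fs ≠ Fb)
    (hfs_nonneg : ∀ᵐ x ∂volume, 0 ≤ fs x) (hfb_nonneg : ∀ᵐ x ∂volume, 0 ≤ fb x)
    (hfb_pos : ∀ᵐ x ∂volume, 0 < fb x)
    (hfs_int : Integrable fs volume) (hfb_int : Integrable fb volume)
    (hFs_dens : ∀ x : ℝ, Fs x = ∫ t in Set.Iic x, fs t)
    (hFb_dens : ∀ x : ℝ, Fb x = ∫ t in Set.Iic x, fb t)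
    (α : ℝ) (hα : α ∈ Set.Ioc (0 : ℝ) 1)
    (F : ℝ → ℝ) (hF : F = fun x => α * Fs x + (1 - α) * Fb x) :
    alpha0 F Fb = α * (1 - essInfLebesgue (fun x => fs x / fb x)) ∧
    (alpha0 F Fb < α ↔ ∃ c : ℝ, 0 < c ∧ ∀ᵐ x ∂volume, c * fb x ≤ fs x) := by
  obtain ⟨hα0, hα1⟩ := hα
  set S : Set ℝ := {a : ℝ | volume {x : ℝ | fs x / fb x < a} = 0} with hSdef
  set β : ℝ := sSup S with hβdef
  have hess : essInfLebesgue (fun x => fs x / fb x) = β := rfl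
  have hFx : ∀ x, F x = α * Fs x + (1 - α) * Fb x := fun x => by rw [hF]
  -- total integrals are 1
  have hUnion : (⋃ n : ℕ, Set.Iic (n : ℝ)) = Set.univ := by
    ext x
    simp only [Set.mem_iUnion, Set.mem_Iic, Set.mem_univ, iff_true]
    exact exists_nat_ge x
  have tends : ∀ f : ℝ → ℝ, Integrable f volume →
      Tendsto (fun n : ℕ => ∫ t in Set.Iic (n : ℝ), f t) atTop (𝓝 (∫ t, f t)) := by
    intro f hf
    have h := tendsto_setIntegral_of_monotone (μ := volume) (f := f)
      (s := fun n : ℕ => Set.Iic (n : ℝ)) (fun n => measurableSet_Iic)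
      (fun m n hmn => Set.Iic_subset_Iic.2 (by exact_mod_cast hmn))
      (by rw [hUnion]; exact hf.integrableOn)
    rwa [hUnion, setIntegral_univ] at h
  have hint_one : ∀ (Fg fg : ℝ → ℝ), Integrable fg volume →
      (∀ x : ℝ, Fg x = ∫ t in Set.Iic x, fg t) → Tendsto Fg atTop (𝓝 1) →
      (∫ t, fg t) = 1 := by
    intro Fg fg hfg hdens htop
    have h1 := tends fg hfg
    have h2 : Tendsto (fun n : ℕ => Fg (n : ℝ)) atTop (𝓝 1) :=
      htop.comp tendsto_natCast_atTop_atTop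
    have e : (fun n : ℕ => ∫ t in Set.Iic (n:ℝ), fg t) = fun n : ℕ => Fg (n:ℝ) := by
      funext n; rw [hdens]
    rw [e] at h1
    exact tendsto_nhds_unique h1 h2
  have hfs1 : (∫ t, fs t) = 1 := hint_one Fs fs hfs_int hFs_dens hFs.2.2.2
  have hfb1 : (∫ t, fb t) = 1 := hint_one Fb fb hfb_int hFb_dens hFb.2.2.2
  -- membership in S
  have mem_S_iff : ∀ c : ℝ, c ∈ S ↔ ∀ᵐ x ∂volume, c ≤ fs x / fb x := by
    intro c
    simp only [hSdef, Set.mem_setOf_eq]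
    constructor
    · intro h; rw [ae_iff]; simpa [not_le] using h
    · intro h; have := ae_iff.1 h; simpa [not_le] using this
  have div_iff : ∀ c : ℝ, (∀ᵐ x ∂volume, c ≤ fs x / fb x) ↔ (∀ᵐ x ∂volume, c * fb x ≤ fs x) := by
    intro c
    constructor <;> intro h <;> filter_upwards [h, hfb_pos] with x hx hbx
    · exact (le_div_iff₀ hbx).1 hx
    · exact (le_div_iff₀ hbx).2 hx
  have h0S : (0:ℝ) ∈ S := by
    rw [mem_S_iff 0]
    filter_upwards [hfs_nonneg, hfb_pos] with x h1 h2
    exact div_nonneg h1 h2.le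
  have hSne : S.Nonempty := ⟨0, h0S⟩
  have hS_le_one : ∀ a ∈ S, a ≤ 1 := by
    intro a ha
    have hae : ∀ᵐ x ∂volume, a * fb x ≤ fs x := (div_iff a).1 ((mem_S_iff a).1 ha)
    have hint : (∫ x, a * fb x) ≤ ∫ x, fs x :=
      integral_mono_ae (hfb_int.const_mul a) hfs_int hae
    rwa [integral_const_mul, hfb1, hfs1, mul_one] at hint
  have hS_bdd : BddAbove S := ⟨1, fun a ha => hS_le_one a ha⟩
  have hβ_nonneg : 0 ≤ β := le_csSup hS_bdd h0S
  have hβS : β ∈ S := by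
    have hsub : {x : ℝ | fs x / fb x < β} ⊆
        ⋃ n : ℕ, {x : ℝ | fs x / fb x < β - 1/(n+1)} := by
      intro x hx
      simp only [Set.mem_setOf_eq] at hx
      obtain ⟨n, hn⟩ := exists_nat_one_div_lt (show (0:ℝ) < β - fs x / fb x by linarith)
      exact Set.mem_iUnion.2 ⟨n, by simp only [Set.mem_setOf_eq]; linarith⟩
    simp only [hSdef, Set.mem_setOf_eq]
    refine measure_mono_null hsub (measure_iUnion_null fun n => ?_)
    have hlt : β - 1/((n:ℝ)+1) < β := by
      have : (0:ℝ) < 1/((n:ℝ)+1) := by positivity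
      linarith
    obtain ⟨a, haS, ha⟩ := exists_lt_of_lt_csSup hSne hlt
    simp only [hSdef, Set.mem_setOf_eq] at haS
    refine measure_mono_null ?_ haS
    intro x hx
    simp only [Set.mem_setOf_eq] at hx ⊢
    linarith
  have h_ae_β : ∀ᵐ x ∂volume, β * fb x ≤ fs x := (div_iff β).1 ((mem_S_iff β).1 hβS)
  have hβ_lt_one : β < 1 := by
    rcases lt_or_ge β 1 with h | h
    · exact h
    exfalso
    have hfs_ge : 0 ≤ᵐ[volume] fun x => fs x - fb x := by
      filter_upwards [h_ae_β, hfb_nonneg] with x h1 h2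
      simp only [Pi.zero_apply]
      nlinarith
    have hsub : Integrable (fun x => fs x - fb x) volume := hfs_int.sub hfb_int
    have hzero : (∫ x, (fs x - fb x)) = 0 := by
      rw [integral_sub hfs_int hfb_int, hfs1, hfb1]; ring
    have heq : (fun x => fs x - fb x) =ᵐ[volume] 0 :=
      (integral_eq_zero_iff_of_nonneg_ae hfs_ge hsub).1 hzero
    apply hne
    funext x
    rw [hFs_dens, hFb_dens]
    apply integral_congr_ae
    apply ae_restrict_of_ae
    filter_upwards [heq] with t ht
    have : fs t - fb t = 0 := ht
    linarith
  set γ0 : ℝ := α * (1 - β) with hγ0def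
  have hγ0_pos : 0 < γ0 := mul_pos hα0 (by linarith)
  have hγ0_le_α : γ0 ≤ α := by nlinarith
  have hγ0_le_one : γ0 ≤ 1 := hγ0_le_α.trans hα1
  have Fdiff : ∀ (f : ℝ → ℝ), Integrable f volume → ∀ x y : ℝ, x ≤ y →
      (∫ t in Set.Iic y, f t) - (∫ t in Set.Iic x, f t) = ∫ t in Set.Ioc x y, f t := by
    intro f hf x y hxy
    rw [intervalIntegral.integral_Iic_sub_Iic hf.integrableOn hf.integrableOn,
      intervalIntegral.integral_of_le hxy]
  have cont_of : ∀ (Fg fg : ℝ → ℝ), Integrable fg volume →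
      (∀ x, Fg x = ∫ t in Set.Iic x, fg t) → Continuous Fg := by
    intro Fg fg hfg hdens
    have e : Fg = fun x => (∫ t in Set.Iic (0:ℝ), fg t) + ∫ t in (0:ℝ)..x, fg t := by
      funext x
      rw [hdens x, ← intervalIntegral.integral_Iic_sub_Iic hfg.integrableOn hfg.integrableOn]
      ring
    rw [e]
    exact continuous_const.add (hfg.continuous_primitive 0)
  have hFs_cont := cont_of Fs fs hfs_int hFs_dens
  have hFb_cont := cont_of Fb fb hfb_int hFb_dens
  -- the admissible set is exactly Icc γ0 1
  have hT : {γ : ℝ | γ ∈ Set.Ioc (0:ℝ) 1 ∧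
      IsCDF (fun x => (F x - (1 - γ) * Fb x) / γ)} = Set.Icc γ0 1 := by
    ext γ
    simp only [Set.mem_setOf_eq, Set.mem_Ioc, Set.mem_Icc]
    constructor
    · rintro ⟨⟨hγpos, hγ1⟩, hcdf⟩
      refine ⟨?_, hγ1⟩
      obtain ⟨hmono, -, -, -⟩ := hcdf
      rcases le_or_gt α γ with hαγ | hαγ
      · exact hγ0_le_α.trans hαγ
      · have key : ∀ a b : ℝ, a ≤ b →
            (∫ x in Set.Ioc a b, (α - γ) * fb x) ≤ ∫ x in Set.Ioc a b, α * fs x := by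
          intro a b hab
          have h' := hmono hab
          simp only [hF] at h'
          rw [div_le_div_iff₀ hγpos hγpos] at h'
          have h2 := le_of_mul_le_mul_right h' hγpos
          have e1 : Fs b - Fs a = ∫ t in Set.Ioc a b, fs t := by
            rw [hFs_dens b, hFs_dens a]; exact Fdiff fs hfs_int a b hab
          have e2 : Fb b - Fb a = ∫ t in Set.Ioc a b, fb t := by
            rw [hFb_dens b, hFb_dens a]; exact Fdiff fb hfb_int a b hab
          rw [integral_const_mul, integral_const_mul, ← e1, ← e2]
          nlinarith [h2]
        have hae := ae_le_of_Ioc_integral_le (fun x => (α - γ) * fb x) (fun x => α * fs x)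
          (hfb_int.const_mul _) (hfs_int.const_mul _)
          (by filter_upwards [hfb_nonneg] with x hx
              simp only [Pi.zero_apply]
              exact mul_nonneg (by linarith) hx)
          (by filter_upwards [hfs_nonneg] with x hx
              simp only [Pi.zero_apply]
              exact mul_nonneg hα0.le hx)
          key
        have hmem : (α - γ)/α ∈ S := by
          rw [mem_S_iff, div_iff]
          filter_upwards [hae, hfb_nonneg] with x h1 h2
          have h1' : (α - γ) * fb x ≤ α * fs x := h1
          rw [div_mul_eq_mul_div, div_le_iff₀ hα0]
          nlinarith
        have hle_β : (α - γ)/α ≤ β := le_csSup hS_bdd hmem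
        rw [div_le_iff₀ hα0] at hle_β
        rw [hγ0def]
        nlinarith
    · rintro ⟨hγγ0, hγ1⟩
      have hγpos : 0 < γ := lt_of_lt_of_le hγ0_pos hγγ0
      have hmono : Monotone (fun x => (F x - (1 - γ) * Fb x) / γ) := by
        intro x y hxy
        simp only [hF]
        rw [div_le_div_iff₀ hγpos hγpos]
        apply mul_le_mul_of_nonneg_right _ hγpos.le
        have e1 : Fs y - Fs x = ∫ t in Set.Ioc x y, fs t := by
          rw [hFs_dens y, hFs_dens x]; exact Fdiff fs hfs_int x y hxy
        have e2 : Fb y - Fb x = ∫ t in Set.Ioc x y, fb t := by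
          rw [hFb_dens y, hFb_dens x]; exact Fdiff fb hfb_int x y hxy
        have hnn : 0 ≤ ∫ t in Set.Ioc x y, (α * fs t + (γ - α) * fb t) := by
          apply setIntegral_nonneg_of_ae
          filter_upwards [h_ae_β, hfb_nonneg] with t h1 h2
          simp only [Pi.zero_apply]
          have hh := mul_le_mul_of_nonneg_left h1 hα0.le
          have hγγ0' : α * (1 - β) ≤ γ := by rw [hγ0def] at hγγ0; exact hγγ0
          have hh2 : 0 ≤ (γ - α * (1 - β)) * fb t :=
            mul_nonneg (by linarith) h2
          nlinarith
        have hsplit : (∫ t in Set.Ioc x y, (α * fs t + (γ - α) * fb t))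
            = α * (∫ t in Set.Ioc x y, fs t) + (γ - α) * ∫ t in Set.Ioc x y, fb t := by
          rw [integral_add ((hfs_int.const_mul α).integrableOn)
            ((hfb_int.const_mul _).integrableOn), integral_const_mul, integral_const_mul]
        nlinarith [hnn, hsplit]
      have hcont : Continuous (fun x => (F x - (1 - γ) * Fb x) / γ) := by
        simp only [hF]
        exact (((continuous_const.mul hFs_cont).add (continuous_const.mul hFb_cont)).sub
          (continuous_const.mul hFb_cont)).div_const γ
      refine ⟨⟨hγpos, hγ1⟩, hmono, fun x => hcont.continuousWithinAt, ?_, ?_⟩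
      · have h0 : Tendsto (fun x => (α * Fs x + (1 - α) * Fb x - (1 - γ) * Fb x) / γ) atBot
            (𝓝 ((α * 0 + (1 - α) * 0 - (1 - γ) * 0) / γ)) :=
          (((hFs.2.2.1.const_mul α).add (hFb.2.2.1.const_mul (1 - α))).sub
            (hFb.2.2.1.const_mul (1 - γ))).div_const γ
        simp only [hF]
        simpa using h0
      · have h1' : Tendsto (fun x => (α * Fs x + (1 - α) * Fb x - (1 - γ) * Fb x) / γ) atTop
            (𝓝 ((α * 1 + (1 - α) * 1 - (1 - γ) * 1) / γ)) :=
          (((hFs.2.2.2.const_mul α).add (hFb.2.2.2.const_mul (1 - α))).sub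
            (hFb.2.2.2.const_mul (1 - γ))).div_const γ
        have e : (α * 1 + (1 - α) * 1 - (1 - γ) * 1) / γ = 1 := by field_simp; ring
        rw [e] at h1'
        simp only [hF]
        exact h1'
  have halpha0 : alpha0 F Fb = γ0 := by
    show sInf _ = γ0
    rw [hT, csInf_Icc hγ0_le_one]
  refine ⟨by rw [halpha0, hess], ?_⟩
  rw [halpha0]
  constructor
  · intro h
    have hβpos : 0 < β := by
      rw [hγ0def] at h
      nlinarith
    exact ⟨β, hβpos, h_ae_β⟩
  · rintro ⟨c, hc, hcae⟩
    have hcS : c ∈ S := (mem_S_iff c).2 ((div_iff c).2 hcae)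
    have hcβ : c ≤ β := le_csSup hS_bdd hcS
    rw [hγ0def]
    nlinarith
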